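/- Fix n ≥ 1. Let Π_n be the lattice of set partitions of {1, …, n}, ordered by refinement (x ≤ y iff every block of x is contained in a block of y), with join ∨, and for x ∈ Π_n let |x| denote the number of blocks of x. Let S(n,k) be the Stirling number of the second kind (the number of set partitions of {1,…,n} into exactly k blocks). Then the |Π_n|×|Π_n| matrix (q^{|x∨y|})_{x,y ∈ Π_n}, with rows and columns indexed by Π_n in any fixed order, has SSNF over ℤ[q] equal to the diagonal matrix whose diagonal entries are, in order, q repeated S(n,1) times, q(q−1) repeated S(n,2) times, …, q(q−1)⋯(q−n+1) repeated S(n,n) times. -/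

import Mathlib

/-- `A` has special Smith normal form `diag d` over `R`: `P * A * Q = diagonal d` for some
`P, Q` of determinant `1`, and `d j ∣ d i` whenever `j ≤ i`. -/
def HasSSNF {R : Type*} [CommRing R] {n : ℕ} (A : Matrix (Fin n) (Fin n) R) (d : Fin n → R) :
    Prop :=
  (∃ P Q : Matrix (Fin n) (Fin n) R, P.det = 1 ∧ Q.det = 1 ∧ P * A * Q = Matrix.diagonal d) ∧
  ∀ i j : Fin n, j ≤ i → d j ∣ d i

/-- The number of blocks of a set partition of `Fin n`, a set partition being identified
with the setoid (equivalence relation) whose classes are its blocks. The lattice order on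
`Setoid (Fin n)` is refinement, as in the partition lattice `Π_n`. -/
noncomputable def numBlocks {n : ℕ} (x : Setoid (Fin n)) : ℕ := Nat.card (Quotient x)

/-- The Stirling number of the second kind `S(n,k)`: the number of set partitions of
`{1,…,n}` into exactly `k` blocks. -/
noncomputable def stirling2 (n k : ℕ) : ℕ := Nat.card {x : Setoid (Fin n) // numBlocks x = k}

open Finset Polynomial Matrix

private lemma cast_desc (q k : ℕ) :
    ((q.descFactorial k : ℤ)) = ∏ t ∈ Finset.range k, ((q:ℤ) - t) := by
  induction k with
  | zero => simp
  | succ k ih =>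
    rw [Nat.descFactorial_succ, Finset.prod_range_succ, ← ih, Nat.cast_mul]
    by_cases h : k ≤ q
    · rw [Nat.cast_sub h]; ring
    · push_neg at h
      rw [Nat.descFactorial_eq_zero_iff_lt.2 h]
      simp

private lemma numBlocks_le {n : ℕ} {z w : Setoid (Fin n)} (h : z ≤ w) :
    numBlocks w ≤ numBlocks z :=
  Nat.card_le_card_of_surjective
    (Quotient.lift (fun a => Quotient.mk w a) (fun _ _ hab => Quotient.sound (h hab)))
    (fun x => Quotient.inductionOn x fun a => ⟨Quotient.mk z a, rfl⟩)

private lemma eq_of_le_of_numBlocks {n : ℕ} {z w : Setoid (Fin n)} (h : z ≤ w)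
    (hc : numBlocks w = numBlocks z) : z = w := by
  set φ : Quotient z → Quotient w :=
    Quotient.lift (fun a => Quotient.mk w a) (fun _ _ hab => Quotient.sound (h hab)) with hφ
  have hsurj : Function.Surjective φ :=
    fun x => Quotient.inductionOn x fun a => ⟨Quotient.mk z a, rfl⟩
  have hbij : Function.Bijective φ := hsurj.bijective_of_nat_card_le (le_of_eq hc.symm)
  refine le_antisymm h (Setoid.le_def.mpr fun {a b} hab => ?_)
  have : φ (Quotient.mk z a) = φ (Quotient.mk z b) := Quotient.sound hab
  exact Quotient.exact (hbij.1 this)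

/-- The fiber of colorings of blocks of `z` inducing the partition `w` is equivalent to
injections from blocks of `w` into the colors. -/
private noncomputable def fiberEquiv {n q : ℕ} (z w : Setoid (Fin n)) (h : z ≤ w) :
    {g : Quotient z → Fin q // Setoid.ker (fun a => g (Quotient.mk z a)) = w}
      ≃ (Quotient w ↪ Fin q) where
  toFun gp := ⟨Quotient.lift (fun a => gp.1 (Quotient.mk z a))
      (fun a b hab => by
        rw [← gp.2] at hab
        exact Setoid.ker_def.mp hab),
    fun x y => Quotient.inductionOn₂ x y fun a b hxy => by
      refine Quotient.sound ?_
      rw [← gp.2]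
      exact Setoid.ker_def.mpr hxy⟩
  invFun emb := ⟨fun x => emb (Quotient.lift (fun a => Quotient.mk w a)
      (fun _ _ hab => Quotient.sound (h hab)) x), by
    refine Setoid.ext fun a b => ?_
    constructor
    · intro hab
      exact Quotient.exact (emb.injective (Setoid.ker_def.mp hab))
    · intro hab
      exact Setoid.ker_def.mpr (congrArg emb (Quotient.sound hab))⟩
  left_inv gp := by
    refine Subtype.ext (funext fun x => ?_)
    induction x using Quotient.ind
    rfl
  right_inv emb := by
    refine Function.Embedding.ext fun x => ?_
    induction x using Quotient.ind
    rfl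

open scoped Classical in
private lemma count_sum (n N q : ℕ) (e : Fin N ≃ Setoid (Fin n)) (z : Setoid (Fin n)) :
    ∑ k : Fin N, (if z ≤ e k then q.descFactorial (numBlocks (e k)) else 0)
      = q ^ numBlocks z := by
  classical
  letI : Fintype (Quotient z) := Fintype.ofFinite _
  have hcard : q ^ numBlocks z = Fintype.card (Quotient z → Fin q) := by
    rw [Fintype.card_fun, Fintype.card_fin, numBlocks, Nat.card_eq_fintype_card]
  rw [hcard, ← Finset.card_univ, Finset.card_eq_sum_card_fiberwise
    (f := fun g : Quotient z → Fin q =>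
        e.symm (Setoid.ker (fun a => g (Quotient.mk z a))))
    (t := Finset.univ) (fun x _ => Finset.mem_univ _)]
  refine Finset.sum_congr rfl fun k _ => ?_
  have hker : ∀ g : Quotient z → Fin q,
      z ≤ Setoid.ker (fun a => g (Quotient.mk z a)) :=
    fun g => Setoid.le_def.mpr fun {a b} hab =>
      Setoid.ker_def.mpr (congrArg g (Quotient.sound hab))
  by_cases h : z ≤ e k
  · rw [if_pos h]
    letI : Fintype (Quotient (e k)) := Fintype.ofFinite _
    have : (Finset.univ.filter fun g : Quotient z → Fin q =>
        e.symm (Setoid.ker (fun a => g (Quotient.mk z a))) = k).card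
        = Fintype.card {g : Quotient z → Fin q //
            Setoid.ker (fun a => g (Quotient.mk z a)) = e k} := by
      rw [Fintype.card_subtype]
      congr 1
      apply Finset.filter_congr
      intro g _
      rw [Equiv.symm_apply_eq]
    rw [this, Fintype.card_congr (fiberEquiv z (e k) h),
      Fintype.card_embedding_eq, Fintype.card_fin, numBlocks, Nat.card_eq_fintype_card]
  · rw [if_neg h, eq_comm, Finset.card_eq_zero, Finset.filter_eq_empty_iff]
    intro g _
    intro hg
    apply h
    rw [Equiv.symm_apply_eq] at hg
    rw [← hg]
    exact hker g

open scoped Classical in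
private lemma key_poly (n N : ℕ) (e : Fin N ≃ Setoid (Fin n)) (z : Setoid (Fin n)) :
    ∑ k : Fin N, (if z ≤ e k then
        ∏ t ∈ Finset.range (numBlocks (e k)), (X - C (t:ℤ)) else 0)
      = X ^ numBlocks z := by
  apply Polynomial.eq_of_infinite_eval_eq
  refine Set.infinite_of_injective_forall_mem (f := fun q : ℕ => (q : ℤ))
    Nat.cast_injective fun q => ?_
  simp only [Set.mem_setOf_eq, eval_finset_sum, eval_pow, eval_X, apply_ite (eval (q:ℤ)),
    eval_prod, eval_sub, eval_C, eval_zero]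
  calc (∑ k : Fin N, if z ≤ e k then ∏ t ∈ Finset.range (numBlocks (e k)), ((q:ℤ) - t) else 0)
      = ∑ k : Fin N, ((if z ≤ e k then q.descFactorial (numBlocks (e k)) else 0 : ℕ) : ℤ) := by
        refine Finset.sum_congr rfl fun k _ => ?_
        split
        · rw [cast_desc]
        · simp
    _ = ((q ^ numBlocks z : ℕ) : ℤ) := by rw [← Nat.cast_sum, count_sum n N q e z]
    _ = (q:ℤ) ^ numBlocks z := by push_cast; ring

/-- For `n ≥ 1`, the matrix `(q^{|x ⊔ y|})_{x,y ∈ Π_n}`, with rows and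
columns indexed by the partition lattice `Π_n = Setoid (Fin n)` in any fixed order `ρ`, has
SSNF over `ℤ[q]` the diagonal matrix whose entries, read along an enumeration `π` of `Π_n`
with a nondecreasing number of blocks, are `∏_{t=0}^{|π i|-1} (q - t)`, i.e. `q` repeated
`S(n,1)` times, `q(q-1)` repeated `S(n,2)` times, …, `q(q-1)⋯(q-n+1)` repeated `S(n,n)`
times. -/
theorem partition_lattice_gram_SSNF (n : ℕ) (hn : 1 ≤ n)
    (N : ℕ) (ρ : Fin N ≃ Setoid (Fin n)) :
    ∃ π : Fin N ≃ Setoid (Fin n),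
      Monotone (fun i => numBlocks (π i)) ∧
      (∀ k : ℕ, (Finset.univ.filter fun i : Fin N => numBlocks (π i) = k).card
        = stirling2 n k) ∧
      HasSSNF (fun i j : Fin N => Polynomial.X ^ numBlocks (ρ i ⊔ ρ j))
        (fun i => ∏ t ∈ Finset.range (numBlocks (π i)),
          (Polynomial.X - Polynomial.C (t : ℤ))) := by
  classical
  have hN : 0 < N := Fin.pos_iff_nonempty.mpr ⟨ρ.symm ⊥⟩
  set f : Fin N → ℕ := fun i => numBlocks (ρ i) with hf
  set π : Fin N ≃ Setoid (Fin n) := (Tuple.sort f : Fin N ≃ Fin N).trans ρ with hπ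
  have hmono : Monotone (fun i => numBlocks (π i)) := Tuple.monotone_sort f
  refine ⟨π, hmono, ?_, ?_, ?_⟩
  · -- Stirling counts
    intro k
    rw [stirling2, ← Nat.card_congr
      (Equiv.subtypeEquiv π (fun i => Iff.rfl) :
        {i : Fin N // numBlocks (π i) = k} ≃ {x : Setoid (Fin n) // numBlocks x = k}),
      Nat.card_eq_fintype_card, Fintype.card_subtype]
  · -- existence of P, Q
    set d : Fin N → Polynomial ℤ :=
      fun i => ∏ t ∈ Finset.range (numBlocks (π i)), (X - C (t:ℤ)) with hd
    set T : Matrix (Fin N) (Fin N) (Polynomial ℤ) :=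
      Matrix.of fun k l => if π k ≤ π l then 1 else 0 with hT
    set τ : Equiv.Perm (Fin N) := ρ.trans π.symm with hτ
    set Z : Matrix (Fin N) (Fin N) (Polynomial ℤ) := T.submatrix τ id with hZ
    have hZapp : ∀ i k, Z i k = if ρ i ≤ π k then 1 else 0 := by
      intro i k
      show (if π (π.symm (ρ i)) ≤ π k then 1 else 0) = _
      rw [Equiv.apply_symm_apply]
    have hTtri : T.BlockTriangular OrderDual.toDual := by
      intro i j hij
      have hij' : i < j := hij
      show (if π i ≤ π j then 1 else 0) = 0
      rw [if_neg]
      intro hle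
      have h1 : numBlocks (π i) ≤ numBlocks (π j) := hmono hij'.le
      have h2 : numBlocks (π j) ≤ numBlocks (π i) := numBlocks_le hle
      exact absurd (π.injective (eq_of_le_of_numBlocks hle (le_antisymm h2 h1))) hij'.ne
    have hdetT : T.det = 1 := by
      rw [Matrix.det_of_lowerTriangular T hTtri]
      refine Finset.prod_eq_one fun i _ => ?_
      show (if π i ≤ π i then 1 else 0) = 1
      rw [if_pos le_rfl]
    set s : Polynomial ℤ := ((Equiv.Perm.sign τ : ℤ) : Polynomial ℤ) with hs
    have hdetZ : Z.det = s := by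
      rw [hZ, Matrix.det_permute τ T, hdetT, mul_one]
    have hss : s * s = 1 := by
      rw [hs, ← Int.cast_mul, ← Units.val_mul, Int.units_mul_self, Units.val_one, Int.cast_one]
    haveI : Invertible Z := Z.invertibleOfIsUnitDet
      (by rw [hdetZ]; exact IsUnit.of_mul_eq_one _ hss)
    set W : Matrix (Fin N) (Fin N) (Polynomial ℤ) := ⅟Z with hW
    have hWZ : W * Z = 1 := invOf_mul_self Z
    have hZW : Z * W = 1 := mul_invOf_self Z
    have hdetW : W.det = s := by
      have h1 : Z.det * W.det = 1 := by rw [← Matrix.det_mul, hZW, Matrix.det_one]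
      calc W.det = s * (s * W.det) := by rw [← mul_assoc, hss, one_mul]
        _ = s * (Z.det * W.det) := by rw [hdetZ]
        _ = s := by rw [h1, mul_one]
    set eps : Fin N → Polynomial ℤ := fun i => if i = ⟨0, hN⟩ then s else 1 with heps
    have heps2 : ∀ i, eps i * eps i = 1 := fun i => by
      by_cases h : i = ⟨0, hN⟩ <;> simp [heps, h, hss]
    have hprodeps : ∏ i, eps i = s := by
      simp only [heps]
      rw [Finset.prod_ite_eq' Finset.univ (⟨0, hN⟩ : Fin N) (fun _ => s)]
      exact if_pos (Finset.mem_univ _)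
    have e1 : Zᵀ * Wᵀ = 1 := by rw [← Matrix.transpose_mul, hWZ, Matrix.transpose_one]
    have hA : (fun i j : Fin N => (X:Polynomial ℤ) ^ numBlocks (ρ i ⊔ ρ j))
        = Z * Matrix.diagonal d * Zᵀ := by
      funext i j
      have h2 : (Z * Matrix.diagonal d * Zᵀ) i j
          = ∑ k, (if ρ i ⊔ ρ j ≤ π k then d k else 0) := by
        rw [Matrix.mul_apply]
        refine Finset.sum_congr rfl fun k _ => ?_
        rw [Matrix.mul_diagonal, Matrix.transpose_apply, hZapp i k, hZapp j k]
        by_cases h1 : ρ i ≤ π k <;> by_cases h2 : ρ j ≤ π k <;>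
          simp [h1, h2, sup_le_iff]
      rw [h2, hd]
      exact (key_poly n N π (ρ i ⊔ ρ j)).symm
    refine ⟨Matrix.diagonal eps * W, Wᵀ * Matrix.diagonal eps, ?_, ?_, ?_⟩
    · rw [Matrix.det_mul, Matrix.det_diagonal, hprodeps, hdetW, hss]
    · rw [Matrix.det_mul, Matrix.det_transpose, hdetW, Matrix.det_diagonal, hprodeps, hss]
    · rw [hA]
      calc Matrix.diagonal eps * W * (Z * Matrix.diagonal d * Zᵀ)
            * (Wᵀ * Matrix.diagonal eps)
          = Matrix.diagonal eps * (W * Z * (Matrix.diagonal d * (Zᵀ * Wᵀ))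
            * Matrix.diagonal eps) := by
            simp only [Matrix.mul_assoc]
        _ = Matrix.diagonal eps * Matrix.diagonal d * Matrix.diagonal eps := by
            rw [hWZ, e1, Matrix.mul_one, Matrix.one_mul, ← Matrix.mul_assoc]
        _ = Matrix.diagonal (fun i => eps i * d i * eps i) := by
            rw [Matrix.diagonal_mul_diagonal, Matrix.diagonal_mul_diagonal]
        _ = Matrix.diagonal d := by
            have hfun : (fun i => eps i * d i * eps i) = d := funext fun i => by
              rw [mul_comm (eps i) (d i), mul_assoc, heps2 i, mul_one]
            rw [hfun]
  · -- divisibility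
    intro i j hij
    dsimp only
    exact Finset.prod_dvd_prod_of_subset _ _ _ (Finset.range_subset_range.2 (hmono hij))
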